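/- A right module E over a unital ring A admits a connection relative to the universal differential calculus (a linear map ∇ : E → E ⊗_A Ω¹A with ∇(ηa) = (∇η)a + η ⊗ δa) if and only if E is projective. -/

import Mathlib

open scoped TensorProduct

variable {A : Type*} [Ring A] [Algebra ℂ A]
variable {E : Type*} [AddCommGroup E] [Module ℂ E] [Module Aᵐᵒᵖ E]
  [SMulCommClass ℂ Aᵐᵒᵖ E] [IsScalarTower ℂ Aᵐᵒᵖ E]

/-- The multiplication map `m : E ⊗[ℂ] A → E`, `η ⊗ a ↦ η·a`.  Its kernel is the canonical
realization of `E ⊗_A Ω¹A` inside `E ⊗_ℂ A` (via `j(η δa) = η ⊗ a - ηa ⊗ 1`). -/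
noncomputable def actMap : E ⊗[ℂ] A →ₗ[ℂ] E :=
  TensorProduct.lift
    (LinearMap.mk₂ ℂ (fun η a => MulOpposite.op a • η)
      (fun m₁ m₂ n => smul_add (MulOpposite.op n) m₁ m₂)
      (fun c m n => (smul_comm c (MulOpposite.op n) m).symm)
      (fun m n₁ n₂ => by simp only [MulOpposite.op_add, add_smul])
      (fun c m n => by simp only [MulOpposite.op_smul, smul_assoc]))

/-- Right multiplication by `a ∈ A` on `E ⊗[ℂ] A` (acting on the second leg). -/
noncomputable def rmulT (a : A) : E ⊗[ℂ] A →ₗ[ℂ] E ⊗[ℂ] A :=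
  LinearMap.lTensor E (LinearMap.mulRight ℂ a)

/-- A (universal) connection on the right `A`-module `E`: a `ℂ`-linear map
`∇ : E → E ⊗_A Ω¹A ⊆ E ⊗_ℂ A` satisfying the Leibniz rule
`∇(ηa) = (∇η)·a + η ⊗ δa`, where `η ⊗ δa` is realized as `η ⊗ a - ηa ⊗ 1`. -/
def IsConnection (Nab : E →ₗ[ℂ] E ⊗[ℂ] A) : Prop :=
  (∀ η : E, actMap (Nab η) = 0) ∧
  ∀ (η : E) (a : A),
    Nab (MulOpposite.op a • η) =
      rmulT a (Nab η) + (η ⊗ₜ[ℂ] a - (MulOpposite.op a • η) ⊗ₜ[ℂ] (1 : A))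

section Aux

open MulOpposite
set_option linter.unusedSectionVars false

@[simp] lemma actMap_tmul (η : E) (a : A) : actMap (η ⊗ₜ[ℂ] a) = op a • η := rfl

@[simp] lemma rmulT_tmul (a : A) (η : E) (b : A) :
    rmulT a (η ⊗ₜ[ℂ] b) = η ⊗ₜ[ℂ] (b * a) := rfl

/-- The inclusion `η ↦ η ⊗ 1`. -/
noncomputable def inclOne : E →ₗ[ℂ] E ⊗[ℂ] A := (TensorProduct.mk ℂ E A).flip 1

@[simp] lemma inclOne_apply (η : E) : inclOne η = η ⊗ₜ[ℂ] (1 : A) := rfl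

/-- From a finitely supported `Aᵐᵒᵖ`-combination on `E` to `E ⊗[ℂ] A`. -/
noncomputable def psiMap : (E →₀ Aᵐᵒᵖ) →ₗ[ℂ] E ⊗[ℂ] A :=
  Finsupp.lsum ℂ fun e =>
    (TensorProduct.mk ℂ E A e).comp (opLinearEquiv ℂ (M := A)).symm.toLinearMap

@[simp] lemma psiMap_single (e : E) (x : Aᵐᵒᵖ) :
    psiMap (Finsupp.single e x) = e ⊗ₜ[ℂ] x.unop := by simp [psiMap]

lemma actMap_psiMap (g : E →₀ Aᵐᵒᵖ) :
    actMap (psiMap g) = Finsupp.linearCombination Aᵐᵒᵖ id g := by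
  induction g using Finsupp.induction_linear with
  | zero => simp
  | add f g hf hg => simp [hf, hg]
  | single e x => simp

lemma psiMap_smul (a : A) (g : E →₀ Aᵐᵒᵖ) :
    psiMap (op a • g) = rmulT a (psiMap g) := by
  induction g using Finsupp.induction_linear with
  | zero => simp
  | add f g hf hg => simp [smul_add, hf, hg]
  | single e x =>
      rw [Finsupp.smul_single, psiMap_single, psiMap_single, smul_eq_mul, unop_mul, unop_op]
      rfl

/-- Express `E ⊗[ℂ] A` in terms of a `ℂ`-basis of `E`, with coefficients in `Aᵐᵒᵖ`. -/
noncomputable def phiMap (B : Module.Basis (Module.Free.ChooseBasisIndex ℂ E) ℂ E) :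
    E ⊗[ℂ] A →ₗ[ℂ] (Module.Free.ChooseBasisIndex ℂ E →₀ Aᵐᵒᵖ) :=
  (Finsupp.mapRange.linearMap (opLinearEquiv ℂ (M := A)).toLinearMap).comp
    ((TensorProduct.finsuppScalarLeft ℂ A _).toLinearMap.comp
      (LinearMap.rTensor A B.repr.toLinearMap))

lemma phiMap_tmul (B : Module.Basis (Module.Free.ChooseBasisIndex ℂ E) ℂ E) (e : E) (a : A) :
    phiMap B (e ⊗ₜ[ℂ] a) =
      (B.repr e).sum fun i c => Finsupp.single i (op (c • a)) := by
  simp only [phiMap, LinearMap.comp_apply, LinearMap.rTensor_tmul, LinearEquiv.coe_toLinearMap,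
    LinearEquiv.coe_coe, TensorProduct.finsuppScalarLeft_apply_tmul]
  rw [map_finsuppSum]
  simp

lemma pi_phi (B : Module.Basis (Module.Free.ChooseBasisIndex ℂ E) ℂ E) (t : E ⊗[ℂ] A) :
    Finsupp.linearCombination Aᵐᵒᵖ (B : _ → E) (phiMap B t) = actMap t := by
  induction t with
  | zero => simp
  | add x y hx hy => simp [hx, hy]
  | tmul e a =>
      rw [phiMap_tmul, map_finsuppSum, actMap_tmul]
      simp only [Finsupp.linearCombination_single]
      have : ∀ (i : Module.Free.ChooseBasisIndex ℂ E) (c : ℂ),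
          (op (c • a) : Aᵐᵒᵖ) • (B i : E) = c • (op a • B i) := by
        intro i c
        rw [op_smul, smul_assoc]
      simp only [this]
      have h2 : ((B.repr e).sum fun i c => c • op a • B i) =
          (DistribMulAction.toLinearMap ℂ E (op a)) ((B.repr e).sum fun i c => c • B i) := by
        rw [map_finsuppSum]
        refine Finsupp.sum_congr fun i _ => ?_
        simp
        rfl
      rw [h2, ← Finsupp.linearCombination_apply, B.linearCombination_repr]
      rfl

lemma phi_rmulT (B : Module.Basis (Module.Free.ChooseBasisIndex ℂ E) ℂ E) (a : A) (t : E ⊗[ℂ] A) :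
    phiMap B (rmulT a t) = op a • phiMap B t := by
  induction t with
  | zero => simp
  | add x y hx hy => simp [hx, hy]
  | tmul e b =>
      rw [rmulT_tmul, phiMap_tmul, phiMap_tmul, Finsupp.smul_sum]
      refine Finsupp.sum_congr fun i _ => ?_
      rw [Finsupp.smul_single, smul_eq_mul, ← op_mul, smul_mul_assoc]

end Aux

/-- A right module over a unital algebra admits a (universal) connection if and only if it
is projective. -/
theorem connection_iff_projective :
    (∃ Nab : E →ₗ[ℂ] E ⊗[ℂ] A, IsConnection Nab) ↔ Module.Projective Aᵐᵒᵖ E := by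
  constructor
  · rintro ⟨Nab, h0, hL⟩
    -- the splitting ℓ = Nab + (· ⊗ 1)
    set ℓ : E →ₗ[ℂ] E ⊗[ℂ] A := Nab + inclOne with hℓ
    have hact : ∀ η : E, actMap (ℓ η) = η := by
      intro η
      simp [hℓ, h0 η]
    have hequiv : ∀ (a : A) (η : E), ℓ (MulOpposite.op a • η) = rmulT a (ℓ η) := by
      intro a η
      simp only [hℓ, LinearMap.add_apply, inclOne_apply, hL η a, map_add, rmulT_tmul, one_mul]
      abel
    -- transport along a basis to get an Aᵐᵒᵖ-linear splitting of a free module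
    let B := Module.Free.chooseBasis ℂ E
    let s : E →ₗ[Aᵐᵒᵖ] (Module.Free.ChooseBasisIndex ℂ E →₀ Aᵐᵒᵖ) :=
      { toFun := fun η => phiMap B (ℓ η)
        map_add' := fun x y => by simp
        map_smul' := fun r η => by
          simpa using (hequiv r.unop η ▸ phi_rmulT B r.unop (ℓ η)) }
    refine Module.Projective.of_split s
      (Finsupp.linearCombination Aᵐᵒᵖ (B : _ → E)) ?_
    ext η
    simp only [LinearMap.comp_apply, LinearMap.id_apply, LinearMap.coe_mk, AddHom.coe_mk, s]
    rw [pi_phi, hact]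
  · intro hP
    obtain ⟨s, hs⟩ := (Module.projective_def (R := Aᵐᵒᵖ) (P := E)).mp hP
    set sC : E →ₗ[ℂ] (E →₀ Aᵐᵒᵖ) := s.restrictScalars ℂ with hsC
    refine ⟨psiMap.comp sC - inclOne, fun η => ?_, fun η a => ?_⟩
    · simp only [LinearMap.sub_apply, LinearMap.comp_apply, map_sub, inclOne_apply,
        actMap_tmul, actMap_psiMap, hsC]
      rw [show ((s.restrictScalars ℂ) η : E →₀ Aᵐᵒᵖ) = s η from rfl, hs η]
      simp
    · have hsm : sC (MulOpposite.op a • η) = MulOpposite.op a • sC η := by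
        simp [hsC]
      simp only [LinearMap.sub_apply, LinearMap.comp_apply, hsm, psiMap_smul, map_sub,
        inclOne_apply, rmulT_tmul, one_mul]
      abel
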